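/- arXiv:2512.01778 — 2 statements merged into one kernel-verified Lean document; each statement's English description precedes it below -/
import Mathlib

section
/- With B = G A A^H G^H + η² G D_h^{-1} D_h^{-H} G^H + σ_z² I_L positive definite and m = η G D_h^{-1} u, the security level S = 1 − (1/K) m^H B^{-1} m satisfies 0 ≤ S ≤ 1. -/
open Matrix ComplexOrder

private lemma cs_aux (K : ℕ) (w : Fin K → ℂ) :
    Complex.normSq (∑ i, w i) ≤ K * ∑ i, Complex.normSq (w i) := by
  have h1 : ‖∑ i, w i‖ ≤ ∑ i, ‖w i‖ := by
    simpa using norm_sum_le Finset.univ w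
  have h2 : (∑ i, ‖w i‖)^2
      ≤ (Finset.univ (α := Fin K)).card * ∑ i, (‖w i‖)^2 :=
    sq_sum_le_card_mul_sum_sq
  calc Complex.normSq (∑ i, w i) = (‖∑ i, w i‖)^2 := (Complex.sq_norm _).symm
    _ ≤ (∑ i, ‖w i‖)^2 := pow_le_pow_left₀ (norm_nonneg _) h1 2
    _ ≤ K * ∑ i, (‖w i‖)^2 := by simpa using h2
    _ = K * ∑ i, Complex.normSq (w i) := by simp [Complex.sq_norm]

/-- with `B = G A Aᴴ Gᴴ + η² G D_h⁻¹ D_h⁻ᴴ Gᴴ + σ_z² I` positive definite and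
`m = η G D_h⁻¹ u` (`u` all-ones), the security level `S = 1 − (1/K) m^H B⁻¹ m`
satisfies `0 ≤ S ≤ 1`. -/
theorem stmt3 (K m L : ℕ) (hK : 0 < K) (η σz : ℝ) (hσz : 0 < σz)
    (G : Matrix (Fin L) (Fin K) ℂ) (A : Matrix (Fin K) (Fin m) ℂ)
    (h : Fin K → ℂ) (hh : ∀ k, h k ≠ 0)
    (B : Matrix (Fin L) (Fin L) ℂ)
    (hB : B = G * A * Aᴴ * Gᴴ
        + ((η : ℂ) ^ 2) •
            (G * Matrix.diagonal (fun k => (h k)⁻¹) * (Matrix.diagonal fun k => (h k)⁻¹)ᴴ * Gᴴ)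
        + ((σz : ℂ) ^ 2) • (1 : Matrix (Fin L) (Fin L) ℂ))
    (hBpd : B.PosDef)
    (mvec : Fin L → ℂ)
    (hm : mvec = (η : ℂ) • ((G * Matrix.diagonal fun k => (h k)⁻¹) *ᵥ fun _ => 1)) :
    0 ≤ 1 - (1 / K) * (star mvec ⬝ᵥ B⁻¹ *ᵥ mvec).re
    ∧ 1 - (1 / K) * (star mvec ⬝ᵥ B⁻¹ *ᵥ mvec).re ≤ 1 := by
  set M : Matrix (Fin L) (Fin K) ℂ := G * Matrix.diagonal (fun k => (h k)⁻¹) with hM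
  set x : Fin L → ℂ := B⁻¹ *ᵥ mvec with hx
  set w : Fin K → ℂ := Mᴴ *ᵥ x with hw
  set c : ℂ := star mvec ⬝ᵥ B⁻¹ *ᵥ mvec with hc
  -- c is nonneg real
  have hcnn : 0 ≤ c := hBpd.inv.posSemidef.dotProduct_mulVec_nonneg mvec
  have hcre : 0 ≤ c.re := by
    have := (Complex.le_def.mp hcnn).1; simpa using this
  have hcim : c.im = 0 := by
    have := (Complex.le_def.mp hcnn).2; simpa using this.symm
  -- B *ᵥ x = mvec
  have hdet : IsUnit B.det := (Matrix.isUnit_iff_isUnit_det B).mp hBpd.isUnit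
  have hBx : B *ᵥ x = mvec := by
    rw [hx, Matrix.mulVec_mulVec, Matrix.mul_nonsing_inv _ hdet, Matrix.one_mulVec]
  -- c = star x ⬝ᵥ B *ᵥ x
  have hherm : (B⁻¹)ᴴ = B⁻¹ := hBpd.inv.isHermitian
  have hc2 : c = star x ⬝ᵥ mvec := by
    rw [hx, Matrix.star_mulVec, hherm, hc, ← Matrix.dotProduct_mulVec]
  have hc3 : c = star x ⬝ᵥ B *ᵥ x := by rw [hBx, hc2]
  -- expand B
  have hMM : G * Matrix.diagonal (fun k => (h k)⁻¹) * (Matrix.diagonal fun k => (h k)⁻¹)ᴴ * Gᴴ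
      = M * Mᴴ := by
    rw [hM, Matrix.conjTranspose_mul]; exact Matrix.mul_assoc _ _ _
  have hT2 : star w ⬝ᵥ w = star x ⬝ᵥ (M * Mᴴ) *ᵥ x := by
    rw [hw, Matrix.star_mulVec, Matrix.conjTranspose_conjTranspose,
      ← Matrix.dotProduct_mulVec, Matrix.mulVec_mulVec]
  have hexp : c = star x ⬝ᵥ (G * A * Aᴴ * Gᴴ) *ᵥ x
      + (η:ℂ)^2 * (star w ⬝ᵥ w) + (σz:ℂ)^2 * (star x ⬝ᵥ x) := by
    rw [hc3, hB, hMM]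
    rw [Matrix.add_mulVec, Matrix.add_mulVec, Matrix.smul_mulVec,
      Matrix.smul_mulVec, Matrix.one_mulVec, dotProduct_add,
      dotProduct_add, dotProduct_smul, dotProduct_smul, ← hT2]
    simp [smul_eq_mul]
  -- T1 nonneg real
  have hT1 : 0 ≤ star x ⬝ᵥ (G * A * Aᴴ * Gᴴ) *ᵥ x := by
    have : G * A * Aᴴ * Gᴴ = (G * A) * (G * A)ᴴ := by
      rw [Matrix.conjTranspose_mul]; exact Matrix.mul_assoc _ _ _
    rw [this]
    exact (Matrix.posSemidef_self_mul_conjTranspose (G * A)).dotProduct_mulVec_nonneg x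
  -- real parts of quadratic pieces
  have hww : (star w ⬝ᵥ w) = ((∑ i, Complex.normSq (w i) : ℝ) : ℂ) := by
    simp [dotProduct, Complex.normSq_eq_conj_mul_self, Pi.star_apply]
  have hxx : (star x ⬝ᵥ x) = ((∑ i, Complex.normSq (x i) : ℝ) : ℂ) := by
    simp [dotProduct, Complex.normSq_eq_conj_mul_self, Pi.star_apply]
  set W : ℝ := ∑ i, Complex.normSq (w i) with hW
  have hWnn : 0 ≤ W := Finset.sum_nonneg fun i _ => Complex.normSq_nonneg _
  have hXnn : 0 ≤ ∑ i, Complex.normSq (x i) := Finset.sum_nonneg fun i _ => Complex.normSq_nonneg _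
  -- re c ≥ η² W
  have hre : η^2 * W ≤ c.re := by
    have := congrArg Complex.re hexp
    rw [hww, hxx] at this
    simp only [Complex.add_re, Complex.mul_re, Complex.ofReal_re, Complex.ofReal_im] at this
    have hT1re : 0 ≤ (star x ⬝ᵥ (G * A * Aᴴ * Gᴴ) *ᵥ x).re := (Complex.le_def.mp hT1).1
    have h1 : ((η:ℂ)^2).re = η^2 := by
      simp [← Complex.ofReal_pow]
    have h2 : ((η:ℂ)^2).im = 0 := by simp [← Complex.ofReal_pow]
    have h3 : ((σz:ℂ)^2).re = σz^2 := by simp [← Complex.ofReal_pow]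
    have h4 : ((σz:ℂ)^2).im = 0 := by simp [← Complex.ofReal_pow]
    rw [h1, h2, h3, h4] at this
    nlinarith [sq_nonneg σz]
  -- c = η * star (sum w)
  have hswu : star w = star x ᵥ* M := by
    rw [hw, Matrix.star_mulVec, Matrix.conjTranspose_conjTranspose]
  have hcsum : c = (η:ℂ) * star (∑ i, w i) := by
    rw [hc2, hm, dotProduct_smul, Matrix.dotProduct_mulVec, ← hswu]
    simp [dotProduct, smul_eq_mul, star_sum]
  -- normSq identity
  have hns : c.re^2 = η^2 * Complex.normSq (∑ i, w i) := by
    have h1 : Complex.normSq c = c.re^2 := by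
      simp [Complex.normSq_apply, hcim, sq]
    have h2 : Complex.normSq c = η^2 * Complex.normSq (∑ i, w i) := by
      rw [hcsum, Complex.normSq_mul]
      rw [show star (∑ i, w i) = (starRingEnd ℂ) (∑ i, w i) from rfl, Complex.normSq_conj,
        Complex.normSq_ofReal]
      ring
    rw [← h1, h2]
  -- Cauchy-Schwarz
  have hCS : Complex.normSq (∑ i, w i) ≤ K * W := cs_aux K w
  have hfin : c.re ≤ K := by
    have hKpos : (0:ℝ) < K := by exact_mod_cast hK
    have h3 : c.re^2 ≤ K * (η^2 * W) := by
      rw [hns]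
      calc η^2 * Complex.normSq (∑ i, w i) ≤ η^2 * (K * W) := by
            exact mul_le_mul_of_nonneg_left hCS (sq_nonneg η)
        _ = K * (η^2 * W) := by ring
    have h4 : c.re^2 ≤ K * c.re :=
      h3.trans (mul_le_mul_of_nonneg_left hre hKpos.le)
    nlinarith
  -- conclude
  have hKpos : (0:ℝ) < K := by exact_mod_cast hK
  constructor
  · have : (1 / (K:ℝ)) * c.re ≤ 1 := by
      rw [div_mul_eq_mul_div, one_mul, div_le_one hKpos]
      exact hfin
    linarith
  · have : 0 ≤ (1 / (K:ℝ)) * c.re := by positivity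
    linarith
end

section
/- Let X, Y be jointly distributed random variables in ℂ^K × ℂ^L such that for every ψ ∈ ℝ the pair (e^{-iψ}X, Y) has the same joint distribution as (X, Y). Then E[X | Y] = 0 almost surely, and consequently the MMSE estimator of s = u^T X given Y is 0, so E[|E[s|Y] − s|²] = Var(s). -/
open MeasureTheory

/-- if `(e^{-iψ}X, Y)` has the same joint law as `(X, Y)` for all `ψ`, then
`E[X | Y] = 0` a.s.; consequently the MMSE estimator of `s = u^T X` given `Y` is `0`, and
its MSE equals `Var(s)`. -/
theorem stmt4 {Ω : Type*} [MeasurableSpace Ω] (Pr : Measure Ω) [IsProbabilityMeasure Pr]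
    (K L : ℕ)
    (X : Ω → Fin K → ℂ) (Y : Ω → Fin L → ℂ)
    (hXint : Integrable X Pr) (hY : Measurable Y)
    (hsym : ∀ ψ : ℝ,
      Measure.map (fun ω => ((fun k => Complex.exp (-(ψ : ℂ) * Complex.I) * X ω k), Y ω)) Pr
        = Measure.map (fun ω => (X ω, Y ω)) Pr) :
    (Pr[X | MeasurableSpace.comap Y inferInstance]) =ᵐ[Pr] 0
    ∧ (Pr[fun ω => ∑ k, X ω k | MeasurableSpace.comap Y inferInstance]) =ᵐ[Pr] 0
    ∧ ∫ ω, ‖(Pr[fun ω' => ∑ k, X ω' k | MeasurableSpace.comap Y inferInstance]) ω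
          - ∑ k, X ω k‖ ^ 2 ∂Pr
      = ∫ ω, ‖(∑ k, X ω k) - ∫ ω', ∑ k, X ω' k ∂Pr‖ ^ 2 ∂Pr := by
  have hm : MeasurableSpace.comap Y inferInstance ≤ ‹MeasurableSpace Ω› := hY.comap_le
  haveI : SigmaFinite (Pr.trim hm) := inferInstance
  have hexp : Complex.exp (-(Real.pi : ℂ) * Complex.I) = -1 := by
    rw [neg_mul, Complex.exp_neg, Complex.exp_pi_mul_I]; norm_num
  have hmap : Measure.map (fun ω => (-X ω, Y ω)) Pr = Measure.map (fun ω => (X ω, Y ω)) Pr := by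
    have := hsym Real.pi
    rw [hexp] at this
    simpa [Pi.neg_def] using this
  have hXaem : AEMeasurable X Pr := hXint.aemeasurable
  -- set integrals of X over Y-preimages vanish
  have hzero : ∀ t : Set (Fin L → ℂ), MeasurableSet t → ∫ ω in Y ⁻¹' t, X ω ∂Pr = 0 := by
    intro t ht
    set g : (Fin K → ℂ) × (Fin L → ℂ) → Fin K → ℂ :=
      Set.indicator (Prod.snd ⁻¹' t) Prod.fst with hg
    have hgm : Measurable g := measurable_fst.indicator (measurable_snd ht)
    have haem1 : AEMeasurable (fun ω => (X ω, Y ω)) Pr := hXaem.prodMk hY.aemeasurable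
    have haem2 : AEMeasurable (fun ω => (-X ω, Y ω)) Pr := hXaem.neg.prodMk hY.aemeasurable
    have h1 : ∫ p, g p ∂(Pr.map (fun ω => (X ω, Y ω)))
        = ∫ ω in Y ⁻¹' t, X ω ∂Pr := by
      rw [integral_map haem1 (hgm.stronglyMeasurable.aestronglyMeasurable),
        ← integral_indicator (hY ht)]
      congr 1 with ω
    have h2 : ∫ p, g p ∂(Pr.map (fun ω => (-X ω, Y ω)))
        = - ∫ ω in Y ⁻¹' t, X ω ∂Pr := by
      rw [integral_map haem2 (hgm.stronglyMeasurable.aestronglyMeasurable),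
        ← integral_neg, ← integral_indicator (hY ht)]
      congr 1 with ω
    have h3 : ∫ ω in Y ⁻¹' t, X ω ∂Pr = - ∫ ω in Y ⁻¹' t, X ω ∂Pr := by
      calc ∫ ω in Y ⁻¹' t, X ω ∂Pr = ∫ p, g p ∂(Pr.map (fun ω => (X ω, Y ω))) := h1.symm
        _ = ∫ p, g p ∂(Pr.map (fun ω => (-X ω, Y ω))) := by rw [hmap]
        _ = - ∫ ω in Y ⁻¹' t, X ω ∂Pr := h2
    exact neg_eq_self.mp h3.symm
  -- conditional expectation of X is 0
  have hms : ∀ s : Set Ω, MeasurableSet[MeasurableSpace.comap Y inferInstance] s →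
      ∫ ω in s, X ω ∂Pr = 0 := by
    rintro s ⟨t, ht, rfl⟩
    exact hzero t ht
  have hcondX : (Pr[X | MeasurableSpace.comap Y inferInstance]) =ᵐ[Pr] 0 := by
    refine (ae_eq_condExp_of_forall_setIntegral_eq hm hXint
      (fun s _ _ => (integrable_zero _ _ _).integrableOn)
      (fun s hs _ => ?_)
      (StronglyMeasurable.aestronglyMeasurable stronglyMeasurable_const)).symm
    rw [hms s hs]
    simp
  -- sum
  set S : Ω → ℂ := fun ω => ∑ k, X ω k with hS
  have hXk : ∀ k : Fin K, Integrable (fun ω => X ω k) Pr := fun k =>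
    (ContinuousLinearMap.proj (R := ℂ) (φ := fun _ : Fin K => ℂ) k).integrable_comp hXint
  have hSint : Integrable S Pr := by
    apply integrable_finset_sum
    intro k _
    exact hXk k
  have hSzero : ∀ s : Set Ω, MeasurableSet[MeasurableSpace.comap Y inferInstance] s →
      ∫ ω in s, S ω ∂Pr = 0 := by
    intro s hs
    have hXs : ∀ k : Fin K, ∫ ω in s, X ω k ∂Pr = 0 := by
      intro k
      have := (ContinuousLinearMap.proj (R := ℂ) (φ := fun _ : Fin K => ℂ)
        k).integral_comp_comm (hXint.integrableOn (s := s))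
      simpa [hms s hs] using this
    show ∫ ω in s, ∑ k, X ω k ∂Pr = 0
    rw [integral_finset_sum _ (fun k _ => (hXk k).integrableOn)]
    simp [hXs]
  have hcondS : (Pr[S | MeasurableSpace.comap Y inferInstance]) =ᵐ[Pr] 0 := by
    refine (ae_eq_condExp_of_forall_setIntegral_eq hm hSint
      (fun s _ _ => (integrable_zero _ _ _).integrableOn)
      (fun s hs _ => ?_)
      (StronglyMeasurable.aestronglyMeasurable stronglyMeasurable_const)).symm
    rw [hSzero s hs]
    simp
  refine ⟨hcondX, hcondS, ?_⟩
  have hES : ∫ ω, S ω ∂Pr = 0 := by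
    rw [← integral_condExp hm (f := S)]
    rw [integral_congr_ae hcondS]
    simp
  rw [hES]
  apply integral_congr_ae
  filter_upwards [hcondS] with ω hω
  rw [hω]
  simp
end
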